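/- If u1, u2 : [0,1] → [−1,1] are integrable, x1 is absolutely continuous with ẋ1(t) = exp(u1(t)) + u1(t) + u2(t) a.e., x1(0) = 0, x1(1) = 2, x2 absolutely continuous with ẋ2 = u2, x2(0) = 0, x2(1) = 1, then ∫₀¹ (u1(t)² + u2(t)²) dt ≥ 1. -/

import Mathlib

open MeasureTheory

lemma sq_intervalIntegrable_aux {u : ℝ → ℝ}
    (hi : IntervalIntegrable u volume 0 1)
    (hb : ∀ t ∈ Set.Icc (0 : ℝ) 1, u t ∈ Set.Icc (-1 : ℝ) 1) :
    IntervalIntegrable (fun t => u t ^ 2) volume 0 1 := by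
  rw [intervalIntegrable_iff_integrableOn_Ioc_of_le (by norm_num : (0:ℝ) ≤ 1)] at hi ⊢
  have hc : IntegrableOn (fun _ => (1:ℝ)) (Set.Ioc (0:ℝ) 1) volume :=
    (integrableOn_const_iff).mpr (Or.inr measure_Ioc_lt_top)
  apply Integrable.mono' hc
  · exact (hi.aestronglyMeasurable.pow 2)
  · rw [ae_restrict_iff' measurableSet_Ioc]
    filter_upwards with t ht
    have h := hb t ⟨le_of_lt ht.1, ht.2⟩
    have h1 : |u t| ≤ 1 := abs_le.mpr ⟨h.1, h.2⟩
    have : |u t ^ 2| = |u t| ^ 2 := by rw [abs_pow]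
    rw [Real.norm_eq_abs, this]
    nlinarith [abs_nonneg (u t)]

theorem problem8_lower_bound (u1 u2 x1 x2 : ℝ → ℝ)
    (hu1i : IntervalIntegrable u1 volume 0 1)
    (hu2i : IntervalIntegrable u2 volume 0 1)
    (hu1 : ∀ t ∈ Set.Icc (0 : ℝ) 1, u1 t ∈ Set.Icc (-1 : ℝ) 1)
    (hu2 : ∀ t ∈ Set.Icc (0 : ℝ) 1, u2 t ∈ Set.Icc (-1 : ℝ) 1)
    (hx1 : ∀ t ∈ Set.Icc (0 : ℝ) 1,
      x1 t = x1 0 + ∫ τ in (0 : ℝ)..t, (Real.exp (u1 τ) + u1 τ + u2 τ))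
    (hx2 : ∀ t ∈ Set.Icc (0 : ℝ) 1, x2 t = x2 0 + ∫ τ in (0 : ℝ)..t, u2 τ)
    (hb1a : x1 0 = 0) (hb1b : x1 1 = 2) (hb2a : x2 0 = 0) (hb2b : x2 1 = 1) :
    1 ≤ ∫ t in (0 : ℝ)..1, ((u1 t) ^ 2 + (u2 t) ^ 2) := by
  have hint : ∫ t in (0:ℝ)..1, u2 t = 1 := by
    have := hx2 1 ⟨by norm_num, le_refl 1⟩
    rw [hb2a, hb2b] at this
    linarith
  have hsq1 := sq_intervalIntegrable_aux hu1i hu1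
  have hsq2 := sq_intervalIntegrable_aux hu2i hu2
  have hlhs : IntervalIntegrable (fun t => 2 * u2 t - 1) volume 0 1 :=
    (hu2i.const_mul 2).sub (intervalIntegrable_const)
  have hmono := intervalIntegral.integral_mono_on (by norm_num : (0:ℝ) ≤ 1) hlhs
    (hsq1.add hsq2) (fun t ht => by
      have h := hu2 t ht
      nlinarith [sq_nonneg (u2 t - 1), sq_nonneg (u1 t)])
  have hcalc : ∫ t in (0:ℝ)..1, (2 * u2 t - 1) = 1 := by
    rw [intervalIntegral.integral_sub (hu2i.const_mul 2) intervalIntegrable_const,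
      intervalIntegral.integral_const_mul, hint]
    simp
    norm_num
  linarith [hmono, hcalc.symm ▸ hmono]
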